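/- For integers 2 ≤ s < k, G₁(k,s) < ((k−s+1)·s + 2)/(−log(1 − 2^{−s})), where log denotes logarithm to base 2. -/

import Mathlib

/-- `A ⊆ F₂^r` is a *generic `(r,s)`-erasure correcting set* if for every `r × s` matrix `M`
over `F₂` of rank `s` there is `a ∈ A` such that the row vector `a·M` has Hamming weight `1`. -/
def IsGenericSet (r s : ℕ) (A : Set (Fin r → ZMod 2)) : Prop :=
  ∀ M : Matrix (Fin r) (Fin s) (ZMod 2), M.rank = s →
    ∃ a ∈ A, hammingNorm (Matrix.vecMul a M) = 1

/-- `F(r,s)`: the minimum cardinality of a generic `(r,s)`-set. -/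
noncomputable def Fgen (r s : ℕ) : ℕ :=
  sInf {n | ∃ A : Finset (Fin r → ZMod 2), IsGenericSet r s ↑A ∧ A.card = n}

/-- The standard bilinear form `⟨x,y⟩ = ∑ i, x i * y i` on `F₂^r`. -/
def bform {r : ℕ} (x y : Fin r → ZMod 2) : ZMod 2 := ∑ i, x i * y i

/-- `A ⊆ F₂^r` is an *(r,s)-set* if for every `s` linearly independent vectors `v₁, …, v_s`
there is `c ∈ A` with `⟨c, v_j⟩ = 1` for all `j`. -/
def IsRSSet (r s : ℕ) (A : Set (Fin r → ZMod 2)) : Prop :=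
  ∀ v : Fin s → (Fin r → ZMod 2), LinearIndependent (ZMod 2) v →
    ∃ c ∈ A, ∀ j, bform c (v j) = 1

/-- `G₁(r,s)`: the minimum cardinality of an `(r,s)`-set. -/
noncomputable def G1 (r s : ℕ) : ℕ :=
  sInf {n | ∃ A : Finset (Fin r → ZMod 2), IsRSSet r s ↑A ∧ A.card = n}

/-- `A ⊆ F₂^r` is an *(r,s)-good set* if for every `s` linearly independent vectors
`v₁, …, v_s` and every `x ∈ F₂^s` there is `c ∈ A` with `⟨c, v_j⟩ = x j` for all `j`. -/
def IsGoodSet (r s : ℕ) (A : Set (Fin r → ZMod 2)) : Prop :=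
  ∀ v : Fin s → (Fin r → ZMod 2), LinearIndependent (ZMod 2) v →
    ∀ x : Fin s → ZMod 2, ∃ c ∈ A, ∀ j, bform c (v j) = x j

/-- `G(r,s)`: the minimum cardinality of an `(r,s)`-good set. -/
noncomputable def Ggood (r s : ℕ) : ℕ :=
  sInf {n | ∃ A : Finset (Fin r → ZMod 2), IsGoodSet r s ↑A ∧ A.card = n}

/-- A linear code `C ⊆ F₂^ι` is *s-wise intersecting* if every `s` linearly independent
codewords have a common coordinate where they are all nonzero. -/
def IsIntersectingCode {ι : Type*} (s : ℕ) (C : Submodule (ZMod 2) (ι → ZMod 2)) : Prop :=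
  ∀ u : Fin s → (ι → ZMod 2), (∀ j, u j ∈ C) → LinearIndependent (ZMod 2) u →
    ∃ i, ∀ j, u j i ≠ 0

/-- `n(k,s)`: the minimum length `n` for which an `s`-wise intersecting `[n,k]` code exists. -/
noncomputable def minIntLen (k s : ℕ) : ℕ :=
  sInf {n | ∃ C : Submodule (ZMod 2) (Fin n → ZMod 2),
    Module.finrank (ZMod 2) C = k ∧ IsIntersectingCode s C}

/-- The Gaussian binomial coefficient `[k choose s]₂` as a real number. -/
noncomputable def gaussBinom (k s : ℕ) : ℝ :=
  ∏ i ∈ Finset.range s, ((2:ℝ)^(k-i) - 1) / ((2:ℝ)^(s-i) - 1)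
open Finset

open scoped Classical

section Aux

/-- linear combination map -/
def Amap {n : ℕ} {M : Type*} [AddCommGroup M] [Module (ZMod 2) M] (t : Fin n → M) :
    (Fin n → ZMod 2) →ₗ[ZMod 2] M where
  toFun x := ∑ i, x i • t i
  map_add' x y := by simp [add_smul, Finset.sum_add_distrib]
  map_smul' r x := by simp [Finset.smul_sum, mul_smul]

lemma Amap_apply {n : ℕ} {M : Type*} [AddCommGroup M] [Module (ZMod 2) M] (t : Fin n → M)
    (x : Fin n → ZMod 2) : Amap t x = ∑ i, x i • t i := rfl

lemma Amap_single {n : ℕ} {M : Type*} [AddCommGroup M] [Module (ZMod 2) M] (t : Fin n → M)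
    (i : Fin n) : Amap t (Pi.single i 1) = t i := by
  rw [Amap_apply, Finset.sum_eq_single i]
  · simp
  · intro j _ hj; simp [Pi.single_apply, hj]
  · simp

lemma span_eq_range_Amap {n : ℕ} {M : Type*} [AddCommGroup M] [Module (ZMod 2) M]
    (t : Fin n → M) : Submodule.span (ZMod 2) (Set.range t) = LinearMap.range (Amap t) := by
  apply le_antisymm
  · rw [Submodule.span_le]
    rintro _ ⟨i, rfl⟩
    exact LinearMap.mem_range.2 ⟨Pi.single i 1, Amap_single t i⟩
  · rintro _ ⟨x, rfl⟩
    rw [Amap_apply]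
    exact Submodule.sum_mem _ fun i _ =>
      Submodule.smul_mem _ _ (Submodule.subset_span (Set.mem_range_self i))

lemma Amap_ker {n : ℕ} {M : Type*} [AddCommGroup M] [Module (ZMod 2) M] {t : Fin n → M}
    (ht : LinearIndependent (ZMod 2) t) : LinearMap.ker (Amap t) = ⊥ := by
  rw [LinearMap.ker_eq_bot']
  intro x hx
  funext i
  exact Fintype.linearIndependent_iff.mp ht x hx i

lemma bform_sum {k n : ℕ} (c : Fin k → ZMod 2) (x : Fin n → ZMod 2)
    (v : Fin n → Fin k → ZMod 2) :
    bform c (∑ i, x i • v i) = ∑ i, x i * bform c (v i) := by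
  simp only [bform, Finset.sum_apply, Pi.smul_apply, smul_eq_mul, Finset.mul_sum]
  rw [Finset.sum_comm]
  apply Finset.sum_congr rfl
  intro i _
  apply Finset.sum_congr rfl
  intro a _
  ring

end Aux
section Aux2

lemma bform_eq_fun {k : ℕ} (f : (Fin k → ZMod 2) →ₗ[ZMod 2] ZMod 2) (y : Fin k → ZMod 2) :
    bform (fun i => f (Pi.single i 1)) y = f y := by
  have h1 : ∀ i : Fin k, f (Pi.single i 1) * y i = f (Pi.single i (y i)) := by
    intro i
    have : Pi.single i (y i) = y i • (Pi.single i 1 : Fin k → ZMod 2) := by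
      funext t
      by_cases h : t = i <;> simp [Pi.single_apply, h]
    rw [this, map_smul, smul_eq_mul, mul_comm]
  rw [bform]
  simp only [h1]
  rw [← map_sum]
  congr 1
  exact Finset.univ_sum_single y

lemma exists_bform {k n : ℕ} {v : Fin n → (Fin k → ZMod 2)}
    (hv : LinearIndependent (ZMod 2) v) (x : Fin n → ZMod 2) :
    ∃ c, ∀ j, bform c (v j) = x j := by
  have hv' : LinearIndepOn (ZMod 2) id (Set.range v) :=
    (linearIndepOn_id_range_iff hv.injective).2 hv
  let b := Module.Basis.extend hv'
  let g : ↑(hv'.extend (Set.subset_univ _)) → ZMod 2 := fun i =>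
    if h : (i : Fin k → ZMod 2) ∈ Set.range v then x h.choose else 0
  let f : (Fin k → ZMod 2) →ₗ[ZMod 2] ZMod 2 := b.constr (ZMod 2) g
  refine ⟨fun i => f (Pi.single i 1), fun j => ?_⟩
  rw [bform_eq_fun]
  have hmem : v j ∈ hv'.extend (Set.subset_univ _) :=
    hv'.subset_extend _ (Set.mem_range_self j)
  have hb : v j = b ⟨v j, hmem⟩ := (Module.Basis.extend_apply_self hv' ⟨v j, hmem⟩).symm
  rw [hb]
  show (b.constr (ZMod 2) g) (b ⟨v j, hmem⟩) = x j
  rw [Module.Basis.constr_basis]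
  have hr : (v j) ∈ Set.range v := Set.mem_range_self j
  simp only [g, dif_pos hr]
  congr 1
  exact hv.injective hr.choose_spec

lemma card_fiber {V W : Type*} [Fintype V] [DecidableEq W] [Fintype W]
    [AddCommGroup V] [AddCommGroup W] [Module (ZMod 2) V] [Module (ZMod 2) W]
    (ψ : V →ₗ[ZMod 2] W) (hs : Function.Surjective ψ) (y : W) :
    (Finset.univ.filter fun c => ψ c = y).card * Fintype.card W = Fintype.card V := by
  have key : ∀ y₁ y₂ : W, (Finset.univ.filter fun c => ψ c = y₁).card
      = (Finset.univ.filter fun c => ψ c = y₂).card := by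
    intro y₁ y₂
    obtain ⟨c₁, hc₁⟩ := hs y₁
    obtain ⟨c₂, hc₂⟩ := hs y₂
    apply Finset.card_bij (fun c _ => c + (c₂ - c₁))
    · intro a ha
      simp only [Finset.mem_filter, Finset.mem_univ, true_and] at ha ⊢
      rw [map_add, map_sub, ha, hc₁, hc₂]
      abel
    · intro a ha b hb hab
      exact add_right_cancel hab
    · intro b hb
      refine ⟨b + (c₁ - c₂), ?_, by abel⟩
      simp only [Finset.mem_filter, Finset.mem_univ, true_and] at hb ⊢
      rw [map_add, map_sub, hb, hc₁, hc₂]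
      abel
  have total : Fintype.card V = ∑ y' : W, (Finset.univ.filter fun c => ψ c = y').card := by
    rw [← Finset.card_univ]
    exact Finset.card_eq_sum_card_fiberwise (fun x _ => Finset.mem_univ (ψ x))
  rw [total]
  rw [Finset.sum_congr rfl (fun y' _ => key y' y)]
  rw [Finset.sum_const, Finset.card_univ, smul_eq_mul, mul_comm]

end Aux2
section Aux3

lemma hit_lemma {k m c : ℕ} (C : Finset (Finset (Fin k → ZMod 2)))
    (hcard : ∀ B ∈ C, B.card = c)
    (hlt : C.card * (2 ^ k - c) ^ m < (2 ^ k) ^ m) :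
    ∃ A : Finset (Fin k → ZMod 2), A.card ≤ m ∧ ∀ B ∈ C, ∃ x ∈ A, x ∈ B := by
  have hcardV : Fintype.card (Fin k → ZMod 2) = 2 ^ k := by
    simp [Fintype.card_fun]
  by_contra hcon
  push_neg at hcon
  have hall : ∀ f : Fin m → (Fin k → ZMod 2), ∃ B ∈ C, ∀ i, f i ∉ B := by
    intro f
    obtain ⟨B, hB, h⟩ := hcon (Finset.image f Finset.univ)
      (le_trans Finset.card_image_le (by simp))
    exact ⟨B, hB, fun i => h (f i) (Finset.mem_image_of_mem f (Finset.mem_univ i))⟩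
  have cover : (Finset.univ : Finset (Fin m → (Fin k → ZMod 2))) ⊆
      C.biUnion (fun B => Fintype.piFinset (fun _ => Finset.univ \ B)) := by
    intro f _
    obtain ⟨B, hB, h⟩ := hall f
    exact Finset.mem_biUnion.2 ⟨B, hB, Fintype.mem_piFinset.2 fun i => by simp [h i]⟩
  have hcard2 : (2 ^ k) ^ m ≤ C.card * (2 ^ k - c) ^ m := by
    calc (2 ^ k) ^ m = (Finset.univ : Finset (Fin m → (Fin k → ZMod 2))).card := by
          rw [Finset.card_univ, Fintype.card_fun, hcardV, Fintype.card_fin]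
      _ ≤ (C.biUnion (fun B => Fintype.piFinset (fun _ => Finset.univ \ B))).card :=
          Finset.card_le_card cover
      _ ≤ ∑ B ∈ C, (Fintype.piFinset (fun _ : Fin m => Finset.univ \ B)).card :=
          Finset.card_biUnion_le
      _ = ∑ B ∈ C, (2 ^ k - c) ^ m := by
          refine Finset.sum_congr rfl fun B hB => ?_
          rw [Fintype.card_piFinset]
          rw [Finset.prod_const]
          rw [Finset.card_sdiff_of_subset (Finset.subset_univ B), Finset.card_univ, hcardV,
            hcard B hB, Finset.card_univ, Fintype.card_fin]
      _ = C.card * (2 ^ k - c) ^ m := by rw [Finset.sum_const, smul_eq_mul]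
  exact absurd hlt (not_lt.2 hcard2)

lemma card_li_tuples (d : ℕ) : ∀ n, n ≤ d →
    ∏ i ∈ Finset.range n, (2 ^ d - 2 ^ i) ≤
      (Finset.univ.filter
        (fun t : Fin n → (Fin d → ZMod 2) => LinearIndependent (ZMod 2) t)).card := by
  intro n
  induction n with
  | zero =>
    intro _
    have : (Finset.univ.filter
        (fun t : Fin 0 → (Fin d → ZMod 2) => LinearIndependent (ZMod 2) t)) = Finset.univ := by
      apply Finset.filter_true_of_mem
      intro t _
      exact linearIndependent_empty_type
    rw [this]
    simp
  | succ n ih =>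
    intro hnd
    have hn : n ≤ d := le_of_lt (Nat.lt_of_lt_of_le (Nat.lt_succ_self n) hnd)
    set W := Fin d → ZMod 2
    have hcardW : Fintype.card W = 2 ^ d := by simp [W, Fintype.card_fun]
    set Sn := Finset.univ.filter (fun t : Fin n → W => LinearIndependent (ZMod 2) t) with hSn
    set Q := Sn.sigma (fun t => Finset.univ.filter
      (fun x : W => x ∉ Submodule.span (ZMod 2) (Set.range t))) with hQ
    have hinj : Q.card ≤ (Finset.univ.filter
        (fun t : Fin (n+1) → W => LinearIndependent (ZMod 2) t)).card := by
      apply Finset.card_le_card_of_injOn (fun p => Fin.cons p.2 p.1)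
      · rintro ⟨t, x⟩ hp
        simp only [Finset.mem_coe, Q, Finset.mem_sigma, Finset.mem_filter, Finset.mem_univ, true_and,
          hSn] at hp
        simp only [Finset.mem_coe, Finset.mem_filter, Finset.mem_univ, true_and]
        exact linearIndependent_fin_cons.2 ⟨hp.1, hp.2⟩
      · rintro ⟨t, x⟩ _ ⟨t', x'⟩ _ h
        simp only at h
        have hx : x = x' := by
          have := congrFun h 0
          simpa using this
        have ht : t = t' := by
          have := congrArg Fin.tail h
          simpa [Fin.tail_cons] using this
        subst hx; subst ht; rfl
    have hfib : ∀ t : Fin n → W, t ∈ Sn →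
        2 ^ d - 2 ^ n ≤ (Finset.univ.filter
          (fun x : W => x ∉ Submodule.span (ZMod 2) (Set.range t))).card := by
      intro t ht
      have hspan : (Finset.univ.filter
          (fun x : W => x ∈ Submodule.span (ZMod 2) (Set.range t))).card ≤ 2 ^ n := by
        rw [← Fintype.card_subtype]
        have hsurj : Function.Surjective
            (fun x : Fin n → ZMod 2 =>
              (⟨Amap t x, by
                rw [span_eq_range_Amap]; exact LinearMap.mem_range.2 ⟨x, rfl⟩⟩ :
                {y : W // y ∈ Submodule.span (ZMod 2) (Set.range t)})) := by
          rintro ⟨y, hy⟩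
          rw [span_eq_range_Amap] at hy
          obtain ⟨x, hx⟩ := LinearMap.mem_range.1 hy
          exact ⟨x, Subtype.ext hx⟩
        calc Fintype.card {y : W // y ∈ Submodule.span (ZMod 2) (Set.range t)}
            ≤ Fintype.card (Fin n → ZMod 2) := Fintype.card_le_of_surjective _ hsurj
          _ = 2 ^ n := by simp [Fintype.card_fun]
      have : (Finset.univ.filter
          (fun x : W => x ∉ Submodule.span (ZMod 2) (Set.range t))).card
          = 2 ^ d - (Finset.univ.filter
          (fun x : W => x ∈ Submodule.span (ZMod 2) (Set.range t))).card := by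
        rw [Finset.filter_not, Finset.card_sdiff_of_subset (Finset.filter_subset _ _),
          Finset.card_univ, hcardW]
      rw [this]
      exact Nat.sub_le_sub_left hspan _
    have hQcard : Sn.card * (2 ^ d - 2 ^ n) ≤ Q.card := by
      rw [hQ, Finset.card_sigma]
      calc Sn.card * (2 ^ d - 2 ^ n) = Sn.card • (2 ^ d - 2 ^ n) := by rw [smul_eq_mul]
        _ ≤ ∑ t ∈ Sn, (Finset.univ.filter
            (fun x : W => x ∉ Submodule.span (ZMod 2) (Set.range t))).card :=
          Finset.card_nsmul_le_sum _ _ _ hfib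
    calc ∏ i ∈ Finset.range (n+1), (2 ^ d - 2 ^ i)
        = (∏ i ∈ Finset.range n, (2 ^ d - 2 ^ i)) * (2 ^ d - 2 ^ n) :=
          Finset.prod_range_succ _ _
      _ ≤ Sn.card * (2 ^ d - 2 ^ n) := Nat.mul_le_mul_right _ (ih hn)
      _ ≤ Q.card := hQcard
      _ ≤ _ := hinj

lemma card_image_mul_le {α β : Type*} [DecidableEq β] (S : Finset α) (f : α → β) (F : ℕ)
    (h : ∀ a ∈ S, F ≤ (S.filter fun b => f b = f a).card) :
    (S.image f).card * F ≤ S.card := by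
  classical
  have total : S.card = ∑ y ∈ S.image f, (S.filter fun a => f a = y).card :=
    Finset.card_eq_sum_card_fiberwise (fun x hx => Finset.mem_image_of_mem f hx)
  rw [total]
  calc (S.image f).card * F = (S.image f).card • F := (smul_eq_mul ..).symm
    _ ≤ ∑ y ∈ S.image f, (S.filter fun a => f a = y).card := by
      apply Finset.card_nsmul_le_sum
      intro y hy
      obtain ⟨a, ha, rfl⟩ := Finset.mem_image.1 hy
      exact h a ha

end Aux3
section Aux4

lemma prod_bound : ∀ s : ℕ, 1 ≤ s →
    1/4 + (1/2:ℝ)^(s+1) ≤ ∏ j ∈ Finset.range s, (1 - (1/2:ℝ)^(j+1)) := by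
  intro s
  induction s with
  | zero => intro h; omega
  | succ n ih =>
    intro _
    by_cases h1 : n = 0
    · subst h1
      norm_num
    · have hn : 1 ≤ n := by omega
      have hih := ih hn
      rw [Finset.prod_range_succ]
      have ht : (0:ℝ) < (1/2:ℝ)^(n+1) := by positivity
      have ht4 : (1/2:ℝ)^(n+1) ≤ 1/4 := by
        calc (1/2:ℝ)^(n+1) ≤ (1/2:ℝ)^2 := by
              apply pow_le_pow_of_le_one <;> norm_num
              omega
          _ = 1/4 := by norm_num
      set t : ℝ := (1/2:ℝ)^(n+1) with hts
      have hstep : (1/4 + t) * (1 - t) ≤ (∏ j ∈ Finset.range n, (1 - (1/2:ℝ)^(j+1))) * (1 - t) := by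
        apply mul_le_mul_of_nonneg_right hih
        nlinarith
      have : (1/2:ℝ)^(n+1+1) = t/2 := by rw [hts]; ring
      rw [this]
      nlinarith

lemma prodid (s' : ℕ) :
    ∏ i ∈ Finset.range s', ((2:ℝ)^s' - 2^i)
      = 2^(s'*s') * ∏ j ∈ Finset.range s', (1 - (1/2:ℝ)^(j+1)) := by
  have hfac : ∀ i ∈ Finset.range s', ((2:ℝ)^s' - 2^i) = 2^s' * (1 - (1/2:ℝ)^(s'-i)) := by
    intro i hi
    have hi' : i ≤ s' := le_of_lt (Finset.mem_range.1 hi)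
    have h2 : (2:ℝ)^(s'-i) * 2^i = 2^s' := by
      rw [← pow_add]; congr 1; omega
    have h2pos : (0:ℝ) < 2^(s'-i) := by positivity
    rw [one_div, inv_pow]
    field_simp
    linarith [h2]
  rw [Finset.prod_congr rfl hfac, Finset.prod_mul_distrib, Finset.prod_const,
    Finset.card_range, ← pow_mul]
  congr 1
  rw [← Finset.prod_range_reflect]
  apply Finset.prod_congr rfl
  intro j hj
  have : s' - (s' - 1 - j) = j + 1 := by
    have := Finset.mem_range.1 hj; omega
  rw [this]

lemma logb_quarter : Real.logb 2 (4⁻¹ : ℝ) = -2 := by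
  rw [Real.logb_inv]
  have : (4:ℝ) = 2^(2:ℕ) := by norm_num
  rw [this, Real.logb_pow, Real.logb_self_eq_one (by norm_num)]
  norm_num

end Aux4
section Aux5

/-- The condition finset attached to a tuple `v`. -/
noncomputable def Bf {k n : ℕ} (v : Fin n → (Fin k → ZMod 2)) : Finset (Fin k → ZMod 2) :=
  Finset.univ.filter (fun c => ∀ j, bform c (v j) = 1)

lemma mem_Bf {k n : ℕ} {v : Fin n → (Fin k → ZMod 2)} {c : Fin k → ZMod 2} :
    c ∈ Bf v ↔ ∀ j, bform c (v j) = 1 := by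
  simp [Bf]

/-- Coordinate-sum functional. -/
def sigL (n : ℕ) : (Fin n → ZMod 2) →ₗ[ZMod 2] ZMod 2 where
  toFun x := ∑ i, x i
  map_add' x y := by simp [Finset.sum_add_distrib]
  map_smul' r x := by simp [Finset.mul_sum]

/-- Embedding of `F₂^{s'}` into the even-weight subspace of `F₂^{s'+1}`. -/
def iotL (s' : ℕ) : (Fin s' → ZMod 2) →ₗ[ZMod 2] (Fin (s'+1) → ZMod 2) where
  toFun x := Fin.cons (∑ i, x i) x
  map_add' x y := by
    funext t
    refine Fin.cases ?_ (fun j => ?_) t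
    · simp [Finset.sum_add_distrib]
    · simp
  map_smul' r x := by
    funext t
    refine Fin.cases ?_ (fun j => ?_) t
    · simp [Finset.mul_sum]
    · simp

lemma sig_iot (s' : ℕ) (x : Fin s' → ZMod 2) : sigL (s'+1) (iotL s' x) = 0 := by
  show ∑ i, (Fin.cons (∑ i, x i) x : Fin (s'+1) → ZMod 2) i = 0
  rw [Fin.sum_cons]
  exact CharTwo.add_self_eq_zero _

lemma iot_inj (s' : ℕ) : Function.Injective (iotL s') := by
  intro x y h
  have : Fin.tail (Fin.cons (∑ i, x i) x : Fin (s'+1) → ZMod 2)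
      = Fin.tail (Fin.cons (∑ i, y i) y : Fin (s'+1) → ZMod 2) := congrArg Fin.tail h
  simpa [Fin.tail_cons] using this

lemma bform_Amap {k n : ℕ} (c : Fin k → ZMod 2) (x : Fin n → ZMod 2)
    (v : Fin n → Fin k → ZMod 2) :
    bform c (Amap v x) = ∑ i, x i * bform c (v i) := by
  rw [Amap_apply, bform_sum]

lemma fiber_bound {k s' : ℕ} (hsk : s' + 1 ≤ k)
    {v : Fin (s'+1) → (Fin k → ZMod 2)} (hv : LinearIndependent (ZMod 2) v) :
    (Finset.univ.filter (fun m₀ : Fin (s'+1) → ZMod 2 => sigL (s'+1) m₀ = 1)).card *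
      (Finset.univ.filter
        (fun d : Fin s' → (Fin s' → ZMod 2) => LinearIndependent (ZMod 2) d)).card
    ≤ ((Finset.univ.filter (fun w : Fin (s'+1) → (Fin k → ZMod 2) =>
        LinearIndependent (ZMod 2) w)).filter (fun w => Bf w = Bf v)).card := by
  classical
  rw [← Finset.card_product]
  set col : (Fin (s'+1) → ZMod 2) × (Fin s' → (Fin s' → ZMod 2)) →
      Fin (s'+1) → (Fin (s'+1) → ZMod 2) :=
    fun p => Fin.cons p.1 (fun t => p.1 + iotL s' (p.2 t)) with hcol
  have hALinj : Function.Injective (Amap v) := by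
    rw [← LinearMap.ker_eq_bot]; exact Amap_ker hv
  -- basic facts about `col p` for good `p`
  have hcolσ : ∀ p : (Fin (s'+1) → ZMod 2) × (Fin s' → (Fin s' → ZMod 2)),
      sigL (s'+1) p.1 = 1 → ∀ j, sigL (s'+1) (col p j) = 1 := by
    intro p hp1 j
    refine Fin.cases ?_ (fun t => ?_) j
    · simpa [hcol] using hp1
    · simp only [hcol, Fin.cons_succ, map_add, sig_iot, hp1, add_zero]
  have hcolLI : ∀ p : (Fin (s'+1) → ZMod 2) × (Fin s' → (Fin s' → ZMod 2)),
      sigL (s'+1) p.1 = 1 → LinearIndependent (ZMod 2) p.2 →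
      LinearIndependent (ZMod 2) (col p) := by
    intro p hp1 hp2
    rw [Fintype.linearIndependent_iff]
    intro g hg
    have expand : ∑ j, g j • col p j
        = (g 0 + ∑ t : Fin s', g t.succ) • p.1 + iotL s' (∑ t : Fin s', g t.succ • p.2 t) := by
      rw [Fin.sum_univ_succ]
      simp only [hcol, Fin.cons_zero, Fin.cons_succ, smul_add]
      rw [Finset.sum_add_distrib, ← Finset.sum_smul, map_sum]
      simp only [map_smul]
      rw [add_smul]
      abel
    rw [expand] at hg
    have hg0 : g 0 + ∑ t : Fin s', g t.succ = 0 := by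
      have := congrArg (sigL (s'+1)) hg
      rw [map_add, map_smul, sig_iot, add_zero, map_zero, smul_eq_mul, hp1, mul_one] at this
      exact this
    have hι : iotL s' (∑ t : Fin s', g t.succ • p.2 t) = 0 := by
      rw [hg0, zero_smul, zero_add] at hg
      exact hg
    have hdd : ∑ t : Fin s', g t.succ • p.2 t = 0 := by
      apply iot_inj s'
      rw [hι, map_zero]
    have hsucc : ∀ t : Fin s', g t.succ = 0 := Fintype.linearIndependent_iff.mp hp2 _ hdd
    have hzero : g 0 = 0 := by
      rw [Finset.sum_congr rfl (fun t _ => hsucc t), Finset.sum_const, smul_zero,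
        add_zero] at hg0
      exact hg0
    intro j
    refine Fin.cases hzero hsucc j
  -- forward direction of the Bf equality
  have hforward : ∀ p : (Fin (s'+1) → ZMod 2) × (Fin s' → (Fin s' → ZMod 2)),
      sigL (s'+1) p.1 = 1 → ∀ c, (∀ j, bform c (v j) = 1) →
      ∀ j, bform c (Amap v (col p j)) = 1 := by
    intro p hp1 c hc j
    rw [bform_Amap]
    have : ∀ i, col p j i * bform c (v i) = col p j i := by
      intro i; rw [hc i, mul_one]
    rw [Finset.sum_congr rfl (fun i _ => this i)]
    exact hcolσ p hp1 j
  apply Finset.card_le_card_of_injOn (fun p => (Amap v) ∘ (col p))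
  · intro p hp
    have hp1 : sigL (s'+1) p.1 = 1 := by
      have := (Finset.mem_product.1 hp).1
      simpa using this
    have hp2 : LinearIndependent (ZMod 2) p.2 := by
      have := (Finset.mem_product.1 hp).2
      simpa using this
    have hwLI : LinearIndependent (ZMod 2) ((Amap v) ∘ (col p)) :=
      (hcolLI p hp1 hp2).map' _ (Amap_ker hv)
    simp only [Finset.mem_coe, Finset.mem_filter, Finset.mem_univ, true_and]
    refine ⟨hwLI, ?_⟩
    -- Bf equality
    obtain ⟨c₀, hc₀⟩ := exists_bform hv (fun _ => (1 : ZMod 2))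
    have hspan : Submodule.span (ZMod 2) (Set.range ((Amap v) ∘ (col p)))
        = Submodule.span (ZMod 2) (Set.range v) := by
      apply Submodule.eq_of_le_of_finrank_le
      · rw [Submodule.span_le]
        rintro _ ⟨j, rfl⟩
        show Amap v (col p j) ∈ _
        rw [span_eq_range_Amap]
        exact LinearMap.mem_range.2 ⟨col p j, rfl⟩
      · rw [finrank_span_eq_card hv, finrank_span_eq_card hwLI]
    have hwmem : ∀ c, (∀ j, bform c ((Amap v ∘ col p) j) = 1) → ∀ i, bform c (v i) = 1 := by
      intro c hc i
      have hvi : v i ∈ Submodule.span (ZMod 2) (Set.range ((Amap v) ∘ (col p))) := by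
        rw [hspan]
        exact Submodule.subset_span (Set.mem_range_self i)
      obtain ⟨a, ha⟩ := (Submodule.mem_span_range_iff_exists_fun (ZMod 2)).1 hvi
      have hc₀w : ∀ j, bform c₀ ((Amap v ∘ col p) j) = 1 := fun j =>
        hforward p hp1 c₀ hc₀ j
      have hsum : ∑ j, a j = 1 := by
        have h1 : bform c₀ (v i) = 1 := hc₀ i
        rw [← ha, bform_sum] at h1
        rw [← h1]
        apply Finset.sum_congr rfl
        intro j _
        rw [hc₀w j, mul_one]
      rw [← ha, bform_sum]
      rw [Finset.sum_congr rfl (fun j _ => by rw [hc j, mul_one] : ∀ j ∈ Finset.univ, a j * bform c ((Amap v ∘ col p) j) = a j)]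
      exact hsum
    ext c
    rw [mem_Bf, mem_Bf]
    constructor
    · exact fun hc => hwmem c hc
    · exact fun hc j => hforward p hp1 c hc j
  · intro p hp p' hp' h
    have hcols : ∀ j, col p j = col p' j := by
      intro j
      apply hALinj
      exact congrFun h j
    have h1 : p.1 = p'.1 := by
      have := hcols 0
      simpa [hcol] using this
    have h2 : p.2 = p'.2 := by
      funext t
      have := hcols t.succ
      simp only [hcol, Fin.cons_succ, h1] at this
      exact iot_inj s' (add_left_cancel this)
    exact Prod.ext h1 h2

end Aux5
section Aux6

lemma Bf_card {k n : ℕ} (hnk : n ≤ k) {v : Fin n → (Fin k → ZMod 2)}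
    (hv : LinearIndependent (ZMod 2) v) : (Bf v).card = 2^(k-n) := by
  classical
  let ψ : (Fin k → ZMod 2) →ₗ[ZMod 2] (Fin n → ZMod 2) :=
    { toFun := fun c => fun j => bform c (v j)
      map_add' := by
        intro c c'; funext j; simp [bform, add_mul, Finset.sum_add_distrib]
      map_smul' := by
        intro r c; funext j; simp [bform, Finset.mul_sum, mul_assoc] }
  have hsurj : Function.Surjective ψ := by
    intro y; obtain ⟨c, hc⟩ := exists_bform hv y; exact ⟨c, funext hc⟩
  have hfil : Bf v = Finset.univ.filter (fun c => ψ c = fun _ => 1) := by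
    apply Finset.filter_congr
    intro c _
    simp only [funext_iff]
    constructor
    · intro h j; exact h j
    · intro h j; exact h j
  have hcf := card_fiber ψ hsurj (fun _ => 1)
  rw [← hfil] at hcf
  have h1 : Fintype.card (Fin n → ZMod 2) = 2^n := by simp [Fintype.card_fun]
  have h2 : Fintype.card (Fin k → ZMod 2) = 2^k := by simp [Fintype.card_fun]
  rw [h1, h2] at hcf
  have hpow : 2^(k-n) * 2^n = 2^k := by rw [← pow_add]; congr 1; omega
  refine Nat.eq_of_mul_eq_mul_right (show 0 < 2^n by positivity) ?_
  rw [hcf, hpow]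

lemma sig_card (n : ℕ) (hn : 1 ≤ n) :
    (Finset.univ.filter (fun m₀ : Fin n → ZMod 2 => sigL n m₀ = 1)).card = 2^(n-1) := by
  classical
  have hsurj : Function.Surjective (sigL n) := by
    intro y
    refine ⟨Pi.single ⟨0, hn⟩ y, ?_⟩
    show ∑ i, Pi.single (⟨0, hn⟩ : Fin n) y i = y
    simp [Pi.single_apply]
  have hcf := card_fiber (sigL n) hsurj 1
  have h1 : Fintype.card (ZMod 2) = 2 := by simp
  have h2 : Fintype.card (Fin n → ZMod 2) = 2^n := by simp [Fintype.card_fun]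
  rw [h1, h2] at hcf
  have hpow : 2^(n-1) * 2 = 2^n := by
    rw [← pow_succ]; congr 1; omega
  refine Nat.eq_of_mul_eq_mul_right (show 0 < 2 by norm_num) ?_
  rw [hcf, hpow]

end Aux6


set_option maxHeartbeats 1000000 in
/-- For `2 ≤ s < k`, `G₁(k,s) < ((k-s+1)·s + 2) / (-log₂(1 - 2^{-s}))`. -/
theorem statement10 (k s : ℕ) (hs : 2 ≤ s) (hsk : s < k) :
    (G1 k s : ℝ) < (((k:ℝ) - s + 1) * s + 2) / (-(Real.logb 2 (1 - ((2:ℝ) ^ s)⁻¹))) := by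
  classical
  obtain ⟨s', rfl⟩ : ∃ s', s = s' + 1 := ⟨s - 1, by omega⟩
  have hs' : 1 ≤ s' := by omega
  have hnk : s' + 1 ≤ k := le_of_lt hsk
  -- ℕ-counting of the distinct conditions
  set T : Finset (Fin (s'+1) → (Fin k → ZMod 2)) :=
    Finset.univ.filter (fun v => LinearIndependent (ZMod 2) v) with hT
  set C : Finset (Finset (Fin k → ZMod 2)) := T.image Bf with hC
  set N : ℕ := C.card with hN
  set Fib : ℕ := 2^s' * ∏ i ∈ Finset.range s', (2^s' - 2^i) with hFib
  have hfibers : ∀ v ∈ T, Fib ≤ (T.filter fun w => Bf w = Bf v).card := by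
    intro v hvT
    have hv : LinearIndependent (ZMod 2) v := by
      simpa [hT] using hvT
    calc Fib = 2^((s'+1)-1) * ∏ i ∈ Finset.range s', (2^s' - 2^i) := by
          rw [hFib]; norm_num
      _ ≤ _ := by
          rw [← sig_card (s'+1) (by omega)]
          exact le_trans (Nat.mul_le_mul_left _ (card_li_tuples s' s' le_rfl))
            (fiber_bound hnk hv)
  have hcount : N * Fib ≤ (2^k)^(s'+1) := by
    calc N * Fib ≤ T.card := card_image_mul_le T Bf Fib hfibers
      _ ≤ (Finset.univ : Finset (Fin (s'+1) → (Fin k → ZMod 2))).card :=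
          Finset.card_le_card (Finset.filter_subset _ _)
      _ = (2^k)^(s'+1) := by
          rw [Finset.card_univ, Fintype.card_fun]
          simp [Fintype.card_fun]
  have hBcard : ∀ B ∈ C, B.card = 2^(k - (s'+1)) := by
    intro B hB
    obtain ⟨v, hvT, rfl⟩ := Finset.mem_image.1 hB
    exact Bf_card hnk (by simpa [hT] using hvT)
  -- real estimates
  set q : ℝ := ((2:ℝ)^(s'+1))⁻¹ with hq
  have hq0 : 0 < q := by rw [hq]; positivity
  have hq4 : q ≤ 1/4 := by
    rw [hq, show (1/4:ℝ) = ((2:ℝ)^(2:ℕ))⁻¹ by norm_num]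
    apply inv_anti₀ (by positivity)
    apply pow_le_pow_right₀ (by norm_num) (by omega)
  have h1q : 0 < 1 - q := by linarith
  have hq1 : 1 - q < 1 := by linarith
  set L : ℝ := -(Real.logb 2 (1 - q)) with hL
  have hL0 : 0 < L := by
    rw [hL]
    have := Real.logb_neg (show (1:ℝ) < 2 by norm_num) h1q hq1
    linarith
  set P : ℝ := ∏ j ∈ Finset.range s', (1 - (1/2:ℝ)^(j+1)) with hP
  have hP0 : 0 < P := by
    rw [hP]
    apply Finset.prod_pos
    intro j _
    have : (1/2:ℝ)^(j+1) < 1 := by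
      apply pow_lt_one₀ (by norm_num) (by norm_num) (by omega)
    linarith
  have hPq : 1/4 < (1 - q) * P := by
    have hb := prod_bound (s'+1) (by omega)
    rw [Finset.prod_range_succ] at hb
    have hqq : (1/2:ℝ)^(s'+1) = q := by
      rw [hq, one_div, inv_pow]
    rw [hqq, ← hP] at hb
    have hpos : (0:ℝ) < (1/2:ℝ)^(s'+1+1) := by positivity
    nlinarith [hb]
  set E : ℕ := (k - (s'+1) + 1) * (s'+1) with hE
  have hnum_cast : ((k:ℝ) - ((s'+1 : ℕ) : ℝ) + 1) * ((s'+1 : ℕ) : ℝ) + 2 = (E:ℝ) + 2 := by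
    rw [hE]
    push_cast [Nat.cast_sub hnk]
    ring
  set x : ℝ := ((E:ℝ) + 2) / L with hx
  have hx0 : 0 < x := by rw [hx]; positivity
  set m : ℕ := ⌈x⌉₊ - 1 with hm
  have hceil1 : 1 ≤ ⌈x⌉₊ := by
    have := Nat.ceil_pos.2 hx0; omega
  have hmcast : (m:ℝ) = (⌈x⌉₊:ℝ) - 1 := by
    rw [hm, Nat.cast_sub hceil1, Nat.cast_one]
  have hmlt : (m:ℝ) < x := by
    rw [hmcast]
    have := Nat.ceil_lt_add_one (le_of_lt hx0)
    linarith
  have hmge : x - 1 ≤ (m:ℝ) := by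
    rw [hmcast]
    have := Nat.le_ceil x
    linarith
  have hmL : (E:ℝ) + 2 - L ≤ (m:ℝ) * L := by
    have hxL : x * L = (E:ℝ) + 2 := by
      rw [hx]; field_simp
    nlinarith [hmge, hL0]
  -- the key inequality 2^E (1-q)^m < P
  have hstar : (2:ℝ)^E * (1 - q)^m < P := by
    have hlog14 : Real.logb 2 (4⁻¹:ℝ) < Real.logb 2 ((1 - q) * P) :=
      Real.logb_lt_logb (by norm_num) (by norm_num) (by nlinarith [hPq])
    rw [logb_quarter] at hlog14
    have hlogmul : Real.logb 2 ((1 - q) * P) = Real.logb 2 (1 - q) + Real.logb 2 P :=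
      Real.logb_mul (ne_of_gt h1q) (ne_of_gt hP0)
    have hkey : (E:ℝ) - (m:ℝ) * L < Real.logb 2 P := by
      rw [hlogmul] at hlog14
      have h1 : Real.logb 2 (1 - q) = -L := by rw [hL]; ring
      rw [h1] at hlog14
      linarith [hmL]
    have hlhs0 : (0:ℝ) < (2:ℝ)^E * (1 - q)^m := by positivity
    refine (Real.logb_lt_logb_iff (show (1:ℝ) < 2 by norm_num) hlhs0 hP0).1 ?_
    rw [Real.logb_mul (by positivity) (by positivity), Real.logb_pow, Real.logb_pow,
      Real.logb_self_eq_one (by norm_num)]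
    have h1 : Real.logb 2 (1 - q) = -L := by rw [hL]; ring
    rw [h1]
    push_cast
    nlinarith [hkey]
  -- cast the counting estimate
  have hFibcast : (Fib:ℝ) = 2^s' * (2^(s'*s') * P) := by
    rw [hFib]
    rw [Nat.cast_mul, Nat.cast_prod]
    have hterm : ∀ i ∈ Finset.range s', ((2^s' - 2^i : ℕ) : ℝ) = (2:ℝ)^s' - 2^i := by
      intro i hi
      rw [Nat.cast_sub (Nat.pow_le_pow_right (by norm_num)
        (le_of_lt (Finset.mem_range.1 hi)))]
      push_cast; ring
    rw [Finset.prod_congr rfl hterm, prodid, ← hP]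
    push_cast
    try ring
  have hNP : (N:ℝ) * P ≤ (2:ℝ)^E := by
    have hc2 : (N:ℝ) * (Fib:ℝ) ≤ (((2^k)^(s'+1) : ℕ) : ℝ) := by
      rw [← Nat.cast_mul]; exact Nat.cast_le.2 hcount
    have hexp : k * (s'+1) = E + (s' + s'*s') := by
      have hf1 : k - (s'+1) + 1 = k - s' := by omega
      have h2 : s' + s'*s' = s'*(s'+1) := by ring
      rw [hE, hf1, h2, ← Nat.add_mul]
      have h3 : k - s' + s' = k := by omega
      rw [h3]
    have hrhs : (((2^k)^(s'+1) : ℕ) : ℝ) = (2:ℝ)^E * (2^s' * 2^(s'*s')) := by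
      push_cast
      rw [← pow_mul, hexp, pow_add, pow_add]
      try ring
    rw [hFibcast, hrhs] at hc2
    have hcpos : (0:ℝ) < 2^s' * 2^(s'*s') := by positivity
    have hc3 : ((N:ℝ) * P) * (2^s' * 2^(s'*s')) ≤ ((2:ℝ)^E) * (2^s' * 2^(s'*s')) := by
      calc ((N:ℝ) * P) * (2^s' * 2^(s'*s')) = (N:ℝ) * (2^s' * (2^(s'*s') * P)) := by ring
        _ ≤ ((2:ℝ)^E) * (2^s' * 2^(s'*s')) := hc2
    exact le_of_mul_le_mul_right hc3 hcpos
  have hfinal : (N:ℝ) * (1 - q)^m < 1 := by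
    have h2 : ((N:ℝ) * P) * (1 - q)^m ≤ (2:ℝ)^E * (1 - q)^m :=
      mul_le_mul_of_nonneg_right hNP (pow_nonneg (le_of_lt h1q) m)
    have h3 : ((N:ℝ) * (1 - q)^m) * P < 1 * P := by
      rw [one_mul]
      calc ((N:ℝ) * (1 - q)^m) * P = ((N:ℝ) * P) * (1 - q)^m := by ring
        _ ≤ (2:ℝ)^E * (1 - q)^m := h2
        _ < P := hstar
    exact lt_of_mul_lt_mul_right h3 (le_of_lt hP0)
  -- the ℕ hitting condition
  have hcastsub : ((2^k - 2^(k-(s'+1)) : ℕ) : ℝ) = (2:ℝ)^k * (1 - q) := by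
    rw [Nat.cast_sub (Nat.pow_le_pow_right (by norm_num) (by omega))]
    push_cast
    have h2 : (2:ℝ)^(k-(s'+1)) * 2^(s'+1) = 2^k := by
      rw [← pow_add]; congr 1; omega
    have h2pos : (0:ℝ) < (2:ℝ)^(s'+1) := by positivity
    have h3 : (2:ℝ)^k * ((2:ℝ)^(s'+1))⁻¹ = 2^(k-(s'+1)) := by
      rw [← h2]
      exact mul_inv_cancel_right₀ (ne_of_gt h2pos) _
    rw [hq, mul_sub, mul_one, h3]
  have hhit : N * (2^k - 2^(k-(s'+1)))^m < (2^k)^m := by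
    rw [← Nat.cast_lt (α := ℝ)]
    push_cast [hcastsub]
    rw [mul_pow]
    calc (N:ℝ) * (((2:ℝ)^k)^m * (1-q)^m) = ((N:ℝ) * (1-q)^m) * ((2:ℝ)^k)^m := by ring
      _ < 1 * ((2:ℝ)^k)^m := by
          apply mul_lt_mul_of_pos_right hfinal (by positivity)
      _ = ((2:ℝ)^k)^m := one_mul _
  obtain ⟨A, hAcard, hAhits⟩ := hit_lemma C hBcard hhit
  have hRS : IsRSSet k (s'+1) ↑A := by
    intro v hv
    have hvT : v ∈ T := by simp [hT, hv]
    obtain ⟨xx, hxA, hxB⟩ := hAhits (Bf v) (Finset.mem_image_of_mem Bf hvT)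
    exact ⟨xx, Finset.mem_coe.2 hxA, mem_Bf.1 hxB⟩
  have hG1 : G1 k (s'+1) ≤ A.card := Nat.sInf_le ⟨A, hRS, rfl⟩
  have hG1m : (G1 k (s'+1) : ℝ) ≤ (m:ℝ) := Nat.cast_le.2 (le_trans hG1 hAcard)
  rw [hnum_cast, ← hx]
  exact lt_of_le_of_lt hG1m hmlt
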